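/- arXiv:1704.04873 — 2 statements merged into one kernel-verified Lean document; each statement's English description precedes it below -/
import Mathlib

section
/- Let N ≥ 2, masses m_1,...,m_N > 0 with total mass M = Σ m_j, and parameters χ, μ̃ > 0. Define the index ν(m_1,...,m_N) = (N−2) − (χM²/(8πμ̃))·(1 − Σ_j (m_j/M)²). Let 1 ≤ N' < N, let M' = Σ_{j=1}^{N'} m_j, let ν_i = ν(m_1,...,m_N) be the index of the full system, let ν̄ = ν(m_1,...,m_{N'}) be the index of the subsystem of the first N' particles, and let ν_f = ν(M', m_{N'+1},...,m_N) be the index of the system after the first N' particles are replaced by a single particle of mass M'. Then ν_f − ν_i = −(ν̄ + 1). -/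
open Finset

/-- The squared Bessel index of a `k`-particle system with masses `m 0, ..., m (k-1)`,
coupling `χ` and diffusion parameter `μt`. -/
noncomputable def besselIndex (χ μt : ℝ) (k : ℕ) (m : ℕ → ℝ) : ℝ :=
  ((k : ℝ) - 2) - χ * (∑ j ∈ Finset.range k, m j) ^ 2 / (8 * Real.pi * μt) *
    (1 - ∑ j ∈ Finset.range k, (m j / ∑ i ∈ Finset.range k, m i) ^ 2)

lemma bessel_eq (χ μt : ℝ) (hμt : 0 < μt) (k : ℕ) (m : ℕ → ℝ)
    (hS : (∑ j ∈ Finset.range k, m j) ≠ 0) :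
    besselIndex χ μt k m = ((k : ℝ) - 2) -
      χ * ((∑ j ∈ Finset.range k, m j) ^ 2 - ∑ j ∈ Finset.range k, (m j) ^ 2)
        / (8 * Real.pi * μt) := by
  unfold besselIndex
  have hq : ∑ j ∈ Finset.range k, (m j / ∑ i ∈ Finset.range k, m i) ^ 2
      = (∑ j ∈ Finset.range k, (m j) ^ 2) / (∑ i ∈ Finset.range k, m i) ^ 2 := by
    rw [Finset.sum_div]
    exact Finset.sum_congr rfl fun j _ => by rw [div_pow]
  rw [hq]
  have hπ : Real.pi ≠ 0 := Real.pi_ne_zero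
  field_simp

/-- Subtraction formula for indices: coalescing the first `N'` particles into one particle of
mass `M' = ∑_{j<N'} m j` changes the full-system index by `ν_f − ν_i = −(ν̄ + 1)`. -/
theorem index_subtraction_formula
    (N N' : ℕ) (hN : 2 ≤ N) (hN'1 : 1 ≤ N') (hN' : N' < N)
    (χ μt : ℝ) (hχ : 0 < χ) (hμt : 0 < μt)
    (m : ℕ → ℝ) (hm : ∀ j < N, 0 < m j) :
    besselIndex χ μt (N - N' + 1)
        (fun j => if j = 0 then ∑ i ∈ Finset.range N', m i else m (N' + j - 1))
      - besselIndex χ μt N m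
      = -(besselIndex χ μt N' m + 1) := by
  have hle : N' ≤ N := hN'.le
  -- positivity of partial sums
  have hA : 0 < ∑ j ∈ Finset.range N', m j :=
    Finset.sum_pos (fun j hj => hm j (lt_of_lt_of_le (Finset.mem_range.mp hj) hle))
      (Finset.nonempty_range_iff.mpr (by omega))
  have hB : 0 < ∑ j ∈ Finset.range N, m j :=
    Finset.sum_pos (fun j hj => hm j (Finset.mem_range.mp hj))
      (Finset.nonempty_range_iff.mpr (by omega))
  -- sums for the coalesced system
  set g : ℕ → ℝ := fun j => if j = 0 then ∑ i ∈ Finset.range N', m i else m (N' + j - 1)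
    with hg
  have hsum : ∀ f : ℝ → ℝ, ∑ j ∈ Finset.range (N - N' + 1), f (g j)
      = f (∑ i ∈ Finset.range N', m i) + ∑ j ∈ Finset.range (N - N'), f (m (N' + j)) := by
    intro f
    rw [Finset.sum_range_succ']
    simp only [hg]
    rw [add_comm]
    congr 1
  have htail : ∀ f : ℝ → ℝ, ∑ j ∈ Finset.range (N - N'), f (m (N' + j))
      = ∑ j ∈ Finset.range N, f (m j) - ∑ j ∈ Finset.range N', f (m j) := by
    intro f
    have := Finset.sum_Ico_eq_sum_range (f := fun j => f (m j)) (m := N') (n := N)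
    rw [← this, eq_sub_iff_add_eq, add_comm, Finset.range_eq_Ico,
      Finset.sum_Ico_consecutive _ (Nat.zero_le N') hle, ← Finset.range_eq_Ico]
  have hGsum : ∑ j ∈ Finset.range (N - N' + 1), g j = ∑ j ∈ Finset.range N, m j := by
    have := hsum id
    have h2 := htail id
    simp only [id] at this h2
    rw [this, h2]; ring
  have hGsq : ∑ j ∈ Finset.range (N - N' + 1), (g j) ^ 2
      = (∑ i ∈ Finset.range N', m i) ^ 2 + ∑ j ∈ Finset.range N, (m j) ^ 2
        - ∑ j ∈ Finset.range N', (m j) ^ 2 := by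
    have := hsum (fun x => x ^ 2)
    have h2 := htail (fun x => x ^ 2)
    rw [this, h2]; ring
  rw [bessel_eq χ μt hμt _ _ (by rw [hGsum]; exact hB.ne'),
    bessel_eq χ μt hμt _ _ hB.ne', bessel_eq χ μt hμt _ _ hA.ne', hGsum, hGsq]
  have hcast : ((N - N' + 1 : ℕ) : ℝ) = (N : ℝ) - (N' : ℝ) + 1 := by
    push_cast [Nat.cast_sub hle]; ring
  rw [hcast]
  have hπ : Real.pi ≠ 0 := Real.pi_ne_zero
  field_simp
  ring
end

section
/- Let μ_1 > 2μ_2 > 0 and χ > 0. Then there exist M_1, M_2 > 0 such that M_2 > 8πμ_2/χ (so the radially-symmetric two-species system blows up in finite time) and simultaneously (4μ_1 − χ(M_1+M_2)/(2π))M_1 + (4μ_2 − χ(M_1+M_2)/(2π))M_2 > 0 (so the total second moment is increasing). -/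
/-- When `μ₁ > 2μ₂ > 0`, there exist component masses `M₁, M₂ > 0` for which the
radially-symmetric two-species PKS system blows up in finite time (`M₂ > 8πμ₂/χ`) while its
total second moment is increasing
(`(4μ₁ − χ(M₁+M₂)/(2π))M₁ + (4μ₂ − χ(M₁+M₂)/(2π))M₂ > 0`). -/
theorem blowup_with_increasing_second_moment
    (μ₁ μ₂ χ : ℝ) (hμ₂ : 0 < μ₂) (hμ₁ : 2 * μ₂ < μ₁) (hχ : 0 < χ) :
    ∃ M₁ M₂ : ℝ, 0 < M₁ ∧ 0 < M₂ ∧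
      8 * Real.pi * μ₂ / χ < M₂ ∧
      0 < (4 * μ₁ - χ * (M₁ + M₂) / (2 * Real.pi)) * M₁
          + (4 * μ₂ - χ * (M₁ + M₂) / (2 * Real.pi)) * M₂ := by
  have hπ : 0 < Real.pi := Real.pi_pos
  obtain ⟨d, hd_eq⟩ : ∃ d, μ₁ = d + 2 * μ₂ := ⟨μ₁ - 2 * μ₂, by ring⟩
  subst hd_eq
  have hd : 0 < d := by linarith
  have hden : 0 < 3 * d + 2 * μ₂ := by linarith
  refine ⟨4 * Real.pi * d / χ,
    8 * Real.pi * μ₂ / χ + 4 * Real.pi * d ^ 2 / (χ * (3 * d + 2 * μ₂)), ?_, ?_, ?_, ?_⟩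
  · positivity
  · positivity
  · have : 0 < 4 * Real.pi * d ^ 2 / (χ * (3 * d + 2 * μ₂)) := by positivity
    linarith
  · have hχ' : χ ≠ 0 := ne_of_gt hχ
    have hπ' : Real.pi ≠ 0 := ne_of_gt hπ
    have hden' : (3 * d + 2 * μ₂) ≠ 0 := ne_of_gt hden
    field_simp
    ring_nf
    nlinarith [mul_pos (mul_pos (pow_pos hπ 3) (pow_pos hχ 8)) (pow_pos hd 5),
      mul_pos (mul_pos (pow_pos hπ 3) (pow_pos hχ 8)) (mul_pos (pow_pos hd 4) hμ₂),
      mul_pos (mul_pos (pow_pos hπ 3) (pow_pos hχ 8)) (mul_pos (pow_pos hd 3) (pow_pos hμ₂ 2)),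
      mul_pos (mul_pos (pow_pos hd 3) hμ₂) hπ, mul_pos (pow_pos hd 4) hπ]
end
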